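/- The polynomial 49Z^4 + 245Z^3 + 357Z^2 + 56Z + 22 is irreducible over Q but becomes reducible over Q(i√7), factoring into two quadratics over Q(i√7). -/
import Mathlib


open Polynomial

instance : Fact (Nat.Prime 5) := ⟨by norm_num⟩

set_option maxHeartbeats 1000000 in
lemma irr5aux : Irreducible (X^4 + 2*X^2 + 2*X + 3 : (ZMod 5)[X]) := by
  set f : (ZMod 5)[X] := X^4+2*X^2+2*X+3 with hf
  have hmon : f.Monic := by rw [hf]; monicity!
  have hdeg : f.natDegree = 4 := by rw [hf]; compute_degree!
  have hf0 : f ≠ 0 := hmon.ne_zero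
  have heval : ∀ x : ZMod 5, f.eval x = x^4+2*x^2+2*x+3 := by intro x; simp [hf]
  have hnr : ∀ x : ZMod 5, x^4+2*x^2+2*x+3 ≠ 0 := by decide
  constructor
  · intro hu
    have := natDegree_eq_zero_of_isUnit hu
    omega
  · intro a b hab
    by_contra hcon
    push_neg at hcon
    obtain ⟨ha, hb⟩ := hcon
    have ha0 : a ≠ 0 := by rintro rfl; rw [zero_mul] at hab; exact hf0 hab
    have hb0 : b ≠ 0 := by rintro rfl; rw [mul_zero] at hab; exact hf0 hab
    have hdab : a.natDegree + b.natDegree = 4 := by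
      rw [← natDegree_mul ha0 hb0, ← hab, hdeg]
    have ha1 : a.natDegree ≠ 0 := by
      intro h
      exact ha (isUnit_iff_degree_eq_zero.mpr
        (show a.degree = 0 by rw [degree_eq_natDegree ha0, h, Nat.cast_zero]))
    have hb1 : b.natDegree ≠ 0 := by
      intro h
      exact hb (isUnit_iff_degree_eq_zero.mpr
        (show b.degree = 0 by rw [degree_eq_natDegree hb0, h, Nat.cast_zero]))
    have hroot : ∀ p q : (ZMod 5)[X], p ≠ 0 → f = p * q → p.natDegree = 1 → False := by
      intro p q hp0 hpq h1
      obtain ⟨x, hx⟩ := exists_root_of_degree_eq_one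
        (show p.degree = 1 by rw [degree_eq_natDegree hp0, h1, Nat.cast_one])
      have : f.eval x = 0 := by rw [hpq, eval_mul, hx, zero_mul]
      rw [heval] at this
      exact hnr x this
    have hle : a.natDegree ≤ 3 := by omega
    have hge : 1 ≤ a.natDegree := by omega
    interval_cases h : a.natDegree
    · exact hroot a b ha0 hab h
    · have hbd : b.natDegree = 2 := by omega
      have hea : ∀ x : ZMod 5, a.eval x = a.coeff 0 + a.coeff 1 * x + a.coeff 2 * x^2 := by
        intro x
        rw [eval_eq_sum_range' (show a.natDegree < 3 by omega)]
        simp [Finset.sum_range_succ]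
      have heb : ∀ x : ZMod 5, b.eval x = b.coeff 0 + b.coeff 1 * x + b.coeff 2 * x^2 := by
        intro x
        rw [eval_eq_sum_range' (show b.natDegree < 3 by omega)]
        simp [Finset.sum_range_succ]
      have e : ∀ x : ZMod 5, (a.coeff 0 + a.coeff 1 * x + a.coeff 2 * x^2) *
          (b.coeff 0 + b.coeff 1 * x + b.coeff 2 * x^2) = x^4+2*x^2+2*x+3 := by
        intro x
        rw [← hea, ← heb, ← eval_mul, ← hab, heval]
      have key : ∀ a0 a1 a2 b0 b1 b2 : ZMod 5,
          (∀ x : ZMod 5, (a0+a1*x+a2*x^2)*(b0+b1*x+b2*x^2) = x^4+2*x^2+2*x+3) → False := by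
        decide
      exact key _ _ _ _ _ _ e
    · exact hroot b a hb0 (by rw [hab, mul_comm]) (by omega)

lemma gZmap12 : (X^4 + 35*X^3 + 357*X^2 + 392*X + 1078 : ℤ[X]).map (Int.castRingHom (ZMod 5))
    = X^4 + 2*X^2 + 2*X + 3 := by
  simp only [Polynomial.map_add, Polynomial.map_mul, Polynomial.map_pow, Polynomial.map_X,
    Polynomial.map_ofNat]
  rw [show ((35:(ZMod 5)[X])) = 0 by
        rw [← map_ofNat C 35, show (35:ZMod 5) = 0 by decide, map_zero],
    show ((357:(ZMod 5)[X])) = 2 by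
        rw [← map_ofNat C 357, show (357:ZMod 5) = 2 by decide, map_ofNat],
    show ((392:(ZMod 5)[X])) = 2 by
        rw [← map_ofNat C 392, show (392:ZMod 5) = 2 by decide, map_ofNat],
    show ((1078:(ZMod 5)[X])) = 3 by
        rw [← map_ofNat C 1078, show (1078:ZMod 5) = 3 by decide, map_ofNat]]
  ring

lemma gZmonic12 : (X^4 + 35*X^3 + 357*X^2 + 392*X + 1078 : ℤ[X]).Monic := by monicity!

lemma gZirr12 : Irreducible (X^4 + 35*X^3 + 357*X^2 + 392*X + 1078 : ℤ[X]) :=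
  gZmonic12.irreducible_of_irreducible_map _ _ (gZmap12 ▸ irr5aux)

lemma gQirr12 : Irreducible (X^4 + 35*X^3 + 357*X^2 + 392*X + 1078 : ℚ[X]) := by
  have h := (IsPrimitive.Int.irreducible_iff_irreducible_map_cast gZmonic12.isPrimitive).mp gZirr12
  have : (X^4 + 35*X^3 + 357*X^2 + 392*X + 1078 : ℤ[X]).map (Int.castRingHom ℚ)
      = (X^4 + 35*X^3 + 357*X^2 + 392*X + 1078 : ℚ[X]) := by
    simp only [Polynomial.map_add, Polynomial.map_mul, Polynomial.map_pow, Polynomial.map_X,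
      Polynomial.map_ofNat]
  rwa [this] at h

lemma fQirr12 : Irreducible (49 * X ^ 4 + 245 * X ^ 3 + 357 * X ^ 2 + 56 * X + 22 : ℚ[X]) := by
  haveI : Invertible (7:ℚ) := invertibleOfNonzero (by norm_num)
  set φ := algEquivCMulXAddC (7:ℚ) 0 with hφ
  have h1 : Irreducible (φ (X^4 + 35*X^3 + 357*X^2 + 392*X + 1078 : ℚ[X])) :=
    (MulEquiv.irreducible_iff φ.toMulEquiv).mpr gQirr12
  have h2 : φ (X^4 + 35*X^3 + 357*X^2 + 392*X + 1078 : ℚ[X])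
      = C 49 * (49 * X ^ 4 + 245 * X ^ 3 + 357 * X ^ 2 + 56 * X + 22 : ℚ[X]) := by
    simp only [hφ, algEquivCMulXAddC_apply, map_add, map_mul, map_pow, map_ofNat, aeval_X]
    ring_nf
    simp [C_eq_natCast]
  rw [h2] at h1
  exact (associated_unit_mul_left _ _ (isUnit_C.mpr (by norm_num))).irreducible h1

/-- `ℚ(i√7)` as a subfield of `ℂ`. -/
noncomputable def Kfield12 : IntermediateField ℚ ℂ :=
  IntermediateField.adjoin ℚ ({Complex.I * ((Real.sqrt 7 : ℝ) : ℂ)} : Set ℂ)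

noncomputable def alp12 : Kfield12 :=
  ⟨Complex.I * ((Real.sqrt 7 : ℝ) : ℂ), IntermediateField.subset_adjoin ℚ _ rfl⟩

lemma alp12_sq : alp12 ^ 2 = -7 := by
  apply Subtype.ext
  push_cast [alp12]
  have h7 : ((Real.sqrt 7 : ℝ) : ℂ)^2 = 7 := by
    rw [← Complex.ofReal_pow, Real.sq_sqrt (by norm_num : (7:ℝ) ≥ 0)]
    norm_num
  rw [mul_pow, Complex.I_sq, h7]
  norm_cast

lemma part2_12 : ∃ q r : Polynomial Kfield12, q.degree = 2 ∧ r.degree = 2 ∧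
    (49 * X ^ 4 + 245 * X ^ 3 + 357 * X ^ 2 + 56 * X + 22 : ℚ[X]).map
      (algebraMap ℚ Kfield12) = q * r := by
  set c : Polynomial Kfield12 := C alp12 with hc
  have hcc : c ^ 2 = -7 := by rw [hc, ← C_pow, alp12_sq, map_neg, map_ofNat]
  set A : Polynomial Kfield12 := C 14 * X^2 + C (35 + 3*alp12) * X + C (5 - 3*alp12) with hA
  set B : Polynomial Kfield12 := C 14 * X^2 + C (35 - 3*alp12) * X + C (5 + 3*alp12) with hB
  set f : Polynomial Kfield12 := 49 * X ^ 4 + 245 * X ^ 3 + 357 * X ^ 2 + 56 * X + 22 with hf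
  have hdA : A.degree = 2 := by rw [hA]; compute_degree!
  have hdB : B.degree = 2 := by rw [hB]; compute_degree!
  have h2 : (2⁻¹ : Kfield12) ≠ 0 := by norm_num
  have hAB : A * B = 4 * f := by
    rw [hA, hB, hf]
    simp only [map_add, map_sub, map_mul, map_ofNat, ← hc]
    linear_combination (-9*X^2+18*X-9 : Polynomial Kfield12) * hcc
  have hmap : (49 * X ^ 4 + 245 * X ^ 3 + 357 * X ^ 2 + 56 * X + 22 : ℚ[X]).map
      (algebraMap ℚ Kfield12) = f := by
    rw [hf]
    simp only [Polynomial.map_add, Polynomial.map_mul, Polynomial.map_pow, Polynomial.map_X,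
      Polynomial.map_ofNat]
  have h4 : (C (2⁻¹ : Kfield12)) * (C (2⁻¹ : Kfield12)) * 4 = 1 := by
    rw [← map_ofNat C 4, ← C_mul, ← C_mul, ← C_1]
    norm_num
  refine ⟨C (2⁻¹ : Kfield12) * A, C (2⁻¹ : Kfield12) * B, ?_, ?_, ?_⟩
  · rw [degree_C_mul h2, hdA]
  · rw [degree_C_mul h2, hdB]
  · rw [hmap]
    calc f = (C (2⁻¹ : Kfield12) * C (2⁻¹ : Kfield12) * 4) * f := by rw [h4, one_mul]
      _ = C (2⁻¹ : Kfield12) * C (2⁻¹ : Kfield12) * (A * B) := by rw [hAB]; ring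
      _ = C (2⁻¹ : Kfield12) * A * (C (2⁻¹ : Kfield12) * B) := by ring

theorem stmt_12 :
    Irreducible (49 * X ^ 4 + 245 * X ^ 3 + 357 * X ^ 2 + 56 * X + 22 : ℚ[X]) ∧
    ∃ q r : Polynomial Kfield12, q.degree = 2 ∧ r.degree = 2 ∧
      (49 * X ^ 4 + 245 * X ^ 3 + 357 * X ^ 2 + 56 * X + 22 : ℚ[X]).map
        (algebraMap ℚ Kfield12) = q * r :=
  ⟨fQirr12, part2_12⟩
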